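/- Let L be a block tridiagonal positive semi-definite matrix with diagonal blocks indexed by Y_1,...,Y_m (so L_{Y_i,Y_j} = 0 for |i−j| ≥ 2), and fix subsets C_i ⊆ Y_i with L̃_{C_i} invertible at each stage, where L̃_{Y_1} = L_{Y_1} and L̃_{Y_i} = L_{Y_i} − (L_{C_{i-1},Y_i})^T (L̃_{C_{i-1}})^{-1} L_{C_{i-1},Y_i}, with L̃_{C_i} the principal submatrix of L̃_{Y_i} indexed by C_i. Then each matrix L̃_{Y_i} is positive semi-definite. -/

import Mathlib

open Matrix

/-- Principal/rectangular submatrix of `L` with rows indexed by `A` and columns by `B`. -/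
def subm {N : ℕ} (L : Matrix (Fin N) (Fin N) ℝ) (A B : Finset (Fin N)) :
    Matrix A B ℝ := Matrix.of fun i j => L i.1 j.1

/-- Principal submatrix of a matrix indexed by `A`, restricted to `B ⊆ A`. -/
def subm2 {N : ℕ} {A B : Finset (Fin N)} (M : Matrix A A ℝ) (h : B ⊆ A) :
    Matrix B B ℝ := Matrix.of fun i j => M ⟨i.1, h i.2⟩ ⟨j.1, h j.2⟩

/-- A positive semidefinite real matrix with nonzero determinant is positive definite. -/
lemma psd_det_posDef {n : Type*} [Fintype n] [DecidableEq n] {A : Matrix n n ℝ}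
    (hA : A.PosSemidef) (hdet : A.det ≠ 0) : A.PosDef := by
  refine Matrix.PosDef.of_dotProduct_mulVec_pos hA.isHermitian fun x hx => ?_
  rcases (hA.dotProduct_mulVec_nonneg x).lt_or_eq with h | h
  · exact h
  · exfalso
    apply hx
    have h0 : A *ᵥ x = 0 := (hA.dotProduct_mulVec_zero_iff x).1 h.symm
    have : A⁻¹ *ᵥ (A *ᵥ x) = x := by
      rw [Matrix.mulVec_mulVec, Matrix.nonsing_inv_mul A (isUnit_iff_ne_zero.2 hdet),
        Matrix.one_mulVec]
    rw [← this, h0, Matrix.mulVec_zero]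

/-- For a block tridiagonal PSD matrix `L` with blocks `Y 0, …, Y (m-1)` and
subsets `Ci i ⊆ Y i` with each `L̃_{C_i}` positive definite (`det > 0`), the matrices
`L̃_{Y_i}` defined by `L̃_{Y_1} = L_{Y_1}`,
`L̃_{Y_i} = L_{Y_i} − (L_{C_{i-1},Y_i})ᵀ (L̃_{C_{i-1}})⁻¹ L_{C_{i-1},Y_i}`
are positive semi-definite. -/
theorem stmt4 {N m : ℕ} (L : Matrix (Fin N) (Fin N) ℝ) (hL : L.PosSemidef)
    (Y : ℕ → Finset (Fin N))
    (hdisj : ∀ i < m, ∀ j < m, i ≠ j → Disjoint (Y i) (Y j))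
    (hcover : (Finset.range m).biUnion Y = Finset.univ)
    (htri : ∀ i < m, ∀ j < m, i + 2 ≤ j →
      ∀ a ∈ Y i, ∀ b ∈ Y j, L a b = 0 ∧ L b a = 0)
    (Ci : ℕ → Finset (Fin N)) (hCi : ∀ i, Ci i ⊆ Y i)
    (Lt : (i : ℕ) → Matrix (Y i) (Y i) ℝ)
    (hLt0 : Lt 0 = subm L (Y 0) (Y 0))
    (hLtS : ∀ i, 0 < i → i < m →
      Lt i = subm L (Y i) (Y i)
        - (subm L (Ci (i - 1)) (Y i))ᵀ * (subm2 (Lt (i - 1)) (hCi (i - 1)))⁻¹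
            * subm L (Ci (i - 1)) (Y i))
    (hpd : ∀ i < m, 0 < (subm2 (Lt i) (hCi i)).det) :
    ∀ i < m, (Lt i).PosSemidef := by
  classical
  have hsym : ∀ a b, L a b = L b a := by
    intro a b
    have := congrFun (congrFun hL.1 b) a
    simpa [Matrix.conjTranspose_apply] using this
  set E : ℕ → Finset (Fin N) := fun i => (Finset.Ico (i + 1) m).biUnion Y with hE
  -- the key invariant
  have key : ∀ i, i < m →
      (Matrix.fromBlocks (Lt i) (subm L (Y i) (E i)) (subm L (E i) (Y i))
        (subm L (E i) (E i))).PosSemidef := by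
    intro i
    induction i with
    | zero =>
      intro _
      have heq : (Matrix.fromBlocks (Lt 0) (subm L (Y 0) (E 0)) (subm L (E 0) (Y 0))
          (subm L (E 0) (E 0)))
          = L.submatrix (Sum.elim Subtype.val Subtype.val) (Sum.elim Subtype.val Subtype.val) := by
        ext p q
        rcases p with p | p <;> rcases q with q | q <;>
          simp [hLt0, subm, Matrix.fromBlocks]
      rw [heq]
      exact hL.submatrix _
    | succ i ih =>
      intro hi1
      have him : i < m := Nat.lt_of_succ_lt hi1
      have hP := ih him
      -- Lt i is PSD
      have hLti : (Lt i).PosSemidef := by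
        have h1 := hP.submatrix (Sum.inl : Y i → (Y i) ⊕ (E i))
        have : (Lt i) = (Matrix.fromBlocks (Lt i) (subm L (Y i) (E i)) (subm L (E i) (Y i))
            (subm L (E i) (E i))).submatrix Sum.inl Sum.inl := by
          ext p q; simp [Matrix.fromBlocks]
        rw [this]; exact h1
      -- the pivot block
      set A : Matrix (Ci i) (Ci i) ℝ := subm2 (Lt i) (hCi i) with hA
      have hApsd : A.PosSemidef := by
        have h1 := hLti.submatrix (fun c : Ci i => (⟨c.1, hCi i c.2⟩ : Y i))
        have : A = (Lt i).submatrix (fun c : Ci i => (⟨c.1, hCi i c.2⟩ : Y i))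
            (fun c : Ci i => (⟨c.1, hCi i c.2⟩ : Y i)) := by
          ext p q; rfl
        rw [this]; exact h1
      have hdet : A.det ≠ 0 := ne_of_gt (hpd i him)
      have hApd : A.PosDef := psd_det_posDef hApsd hdet
      haveI : Invertible A := A.invertibleOfIsUnitDet (isUnit_iff_ne_zero.2 hdet)
      -- restrict the invariant to (Ci i) ⊕ (E i)
      set B : Matrix (Ci i) (E i) ℝ := subm L (Ci i) (E i) with hB
      have hP' : (Matrix.fromBlocks A B Bᴴ (subm L (E i) (E i))).PosSemidef := by
        have h1 := hP.submatrix
          (Sum.map (fun c : Ci i => (⟨c.1, hCi i c.2⟩ : Y i)) (id : E i → E i))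
        have heq : (Matrix.fromBlocks A B Bᴴ (subm L (E i) (E i)))
            = (Matrix.fromBlocks (Lt i) (subm L (Y i) (E i)) (subm L (E i) (Y i))
              (subm L (E i) (E i))).submatrix
              (Sum.map (fun c : Ci i => (⟨c.1, hCi i c.2⟩ : Y i)) (id : E i → E i))
              (Sum.map (fun c : Ci i => (⟨c.1, hCi i c.2⟩ : Y i)) (id : E i → E i)) := by
          ext p q
          rcases p with p | p <;> rcases q with q | q <;>
            simp [hA, hB, subm, subm2, Matrix.fromBlocks, Matrix.conjTranspose_apply,
              hsym p.1 q.1]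
        rw [heq]; exact h1
      -- Schur complement is PSD
      have hschur : (subm L (E i) (E i) - Bᴴ * A⁻¹ * B).PosSemidef :=
        (Matrix.PosDef.fromBlocks₁₁ B (subm L (E i) (E i)) hApd).1 hP'
      -- inclusions
      have hYE : ∀ a : Fin N, a ∈ Y (i + 1) → a ∈ E i := by
        intro a ha
        exact Finset.mem_biUnion.2 ⟨i + 1, Finset.mem_Ico.2 ⟨le_refl _, hi1⟩, ha⟩
      have hEE : ∀ a : Fin N, a ∈ E (i + 1) → a ∈ E i := by
        intro a ha
        rcases Finset.mem_biUnion.1 ha with ⟨j, hj, haj⟩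
        rcases Finset.mem_Ico.1 hj with ⟨hj1, hj2⟩
        exact Finset.mem_biUnion.2 ⟨j, Finset.mem_Ico.2 ⟨by omega, hj2⟩, haj⟩
      -- columns of B indexed by elements of E (i+1) vanish
      have hcol : ∀ (d : Ci i) (b : Fin N), b ∈ E (i + 1) → L d.1 b = 0 ∧ L b d.1 = 0 := by
        intro d b hb
        rcases Finset.mem_biUnion.1 hb with ⟨j, hj, hbj⟩
        rcases Finset.mem_Ico.1 hj with ⟨hj1, hj2⟩
        exact htri i him j hj2 (by omega) d.1 (hCi i d.2) b hbj
      -- reindex the Schur complement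
      set e : (Y (i + 1) ⊕ E (i + 1)) → E i :=
        Sum.elim (fun a => ⟨a.1, hYE a.1 a.2⟩) (fun a => ⟨a.1, hEE a.1 a.2⟩) with he
      have h2 := hschur.submatrix e
      have heq2 : (Matrix.fromBlocks (Lt (i + 1)) (subm L (Y (i + 1)) (E (i + 1)))
          (subm L (E (i + 1)) (Y (i + 1))) (subm L (E (i + 1)) (E (i + 1))))
          = (subm L (E i) (E i) - Bᴴ * A⁻¹ * B).submatrix e e := by
        have hLt1 : Lt (i + 1) = subm L (Y (i + 1)) (Y (i + 1))
            - (subm L (Ci i) (Y (i + 1)))ᵀ * A⁻¹ * subm L (Ci i) (Y (i + 1)) := by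
          simpa using hLtS (i + 1) (Nat.succ_pos i) hi1
        ext p q
        rcases p with p | p <;> rcases q with q | q
        · -- Y(i+1) × Y(i+1) : the genuine Schur correction
          simp only [Matrix.fromBlocks_apply₁₁, hLt1, Matrix.sub_apply, Matrix.submatrix_apply,
            he, Sum.elim_inl, Matrix.mul_apply, Matrix.transpose_apply,
            Matrix.conjTranspose_apply, subm, Matrix.of_apply, star_trivial, hB]
        · -- Y(i+1) × E(i+1) : correction vanishes
          simp only [Matrix.fromBlocks_apply₁₂, Matrix.sub_apply, Matrix.submatrix_apply,
            he, Sum.elim_inl, Sum.elim_inr, subm, Matrix.of_apply]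
          rw [Matrix.mul_apply]
          rw [Finset.sum_eq_zero, sub_zero]
          intro d _
          rw [hB]
          simp [subm, (hcol d q.1 q.2).1]
        · -- E(i+1) × Y(i+1)
          simp only [Matrix.fromBlocks_apply₂₁, Matrix.sub_apply, Matrix.submatrix_apply,
            he, Sum.elim_inl, Sum.elim_inr, subm, Matrix.of_apply]
          rw [Matrix.mul_apply]
          rw [Finset.sum_eq_zero, sub_zero]
          intro d _
          rw [Matrix.mul_apply, Finset.sum_eq_zero, zero_mul]
          intro c _
          rw [hB]
          simp only [subm, Matrix.conjTranspose_apply, Matrix.of_apply, star_trivial,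
            mul_eq_zero]
          exact Or.inl ((hcol c p.1 p.2).1)
        · -- E(i+1) × E(i+1)
          simp only [Matrix.fromBlocks_apply₂₂, Matrix.sub_apply, Matrix.submatrix_apply,
            he, Sum.elim_inr, subm, Matrix.of_apply]
          rw [Matrix.mul_apply]
          rw [Finset.sum_eq_zero, sub_zero]
          intro d _
          rw [hB]
          simp [subm, (hcol d q.1 q.2).1]
      rw [heq2]
      exact h2
  -- conclude
  intro i hi
  have h1 := (key i hi).submatrix (Sum.inl : Y i → (Y i) ⊕ (E i))
  have : (Lt i) = (Matrix.fromBlocks (Lt i) (subm L (Y i) (E i)) (subm L (E i) (Y i))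
      (subm L (E i) (E i))).submatrix Sum.inl Sum.inl := by
    ext p q; simp [Matrix.fromBlocks]
  rw [this]; exact h1
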